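/- For z < 0 and 0 < α < 1: ∫₀^∞ (e^{zx} − 1) x^{−1−α} dx = Γ(−α)·(−z)^α, where Γ(−α) = −Γ(1−α)/α. -/

import Mathlib

open MeasureTheory Set Filter Real

lemma stable_exp_bounds {z x : ℝ} (hz : z < 0) (hx : 0 ≤ x) :
    0 ≤ 1 - Real.exp (z * x) ∧ 1 - Real.exp (z * x) ≤ -z * x ∧ 1 - Real.exp (z * x) ≤ 1 := by
  have h1 : z * x ≤ 0 := mul_nonpos_of_nonpos_of_nonneg hz.le hx
  have h2 : Real.exp (z * x) ≤ 1 := Real.exp_le_one_iff.2 h1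
  have h3 := Real.add_one_le_exp (z * x)
  have h4 := Real.exp_pos (z * x)
  refine ⟨by linarith, by linarith, by linarith⟩

lemma stable_phi_integrable (α z : ℝ) (hα1 : α < 1) (hz : z < 0) :
    IntegrableOn (fun x : ℝ => Real.exp (z * x) * x ^ (-α)) (Set.Ioi 0) := by
  have h := integrableOn_rpow_mul_exp_neg_mul_rpow (p := 1) (s := -α) (b := -z)
    (by linarith) zero_lt_one (by linarith)
  refine h.congr_fun (fun x hx => ?_) measurableSet_Ioi
  simp only [Real.rpow_one]
  ring_nf

lemma stable_h_integrable (α z : ℝ) (hα : 0 < α) (hα1 : α < 1) (hz : z < 0) :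
    IntegrableOn (fun x : ℝ => (Real.exp (z * x) - 1) * x ^ (-1 - α)) (Set.Ioi 0) := by
  have hmeas : ∀ s : Set ℝ, s ⊆ Set.Ioi 0 → MeasurableSet s →
      AEStronglyMeasurable (fun x : ℝ => (Real.exp (z * x) - 1) * x ^ (-1 - α))
        (volume.restrict s) := by
    intro s hs hsm
    refine ContinuousOn.aestronglyMeasurable ?_ hsm
    refine ContinuousOn.mul (by fun_prop) ?_
    intro x hx
    exact (Real.continuousAt_rpow_const x _ (Or.inl (ne_of_gt (hs hx)))).continuousWithinAt
  have h1 : IntegrableOn (fun x : ℝ => (Real.exp (z * x) - 1) * x ^ (-1 - α)) (Set.Ioc 0 1) := by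
    have hbound : IntegrableOn (fun x : ℝ => (-z) * x ^ (-α)) (Set.Ioc 0 1) := by
      have h0 := intervalIntegral.intervalIntegrable_rpow' (a := 0) (b := 1) (r := -α)
        (by linarith)
      rw [intervalIntegrable_iff_integrableOn_Ioc_of_le zero_le_one] at h0
      exact h0.const_mul _
    refine Integrable.mono' hbound
      (hmeas _ Set.Ioc_subset_Ioi_self measurableSet_Ioc) ?_
    filter_upwards [ae_restrict_mem measurableSet_Ioc] with x hx
    have hx0 : 0 < x := hx.1
    obtain ⟨hb0, hb1, _⟩ := stable_exp_bounds hz hx0.le (z := z)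
    have he : |Real.exp (z * x) - 1| ≤ (-z) * x := by
      rw [abs_sub_comm, abs_of_nonneg hb0]; exact hb1
    have hxp : (0:ℝ) ≤ x ^ (-1 - α) := Real.rpow_nonneg hx0.le _
    calc ‖(Real.exp (z * x) - 1) * x ^ (-1 - α)‖
        = |Real.exp (z * x) - 1| * x ^ (-1 - α) := by
          rw [norm_mul, Real.norm_eq_abs, Real.norm_eq_abs, abs_of_nonneg hxp]
      _ ≤ ((-z) * x) * x ^ (-1 - α) := mul_le_mul_of_nonneg_right he hxp
      _ = (-z) * (x ^ (1:ℝ) * x ^ (-1 - α)) := by rw [Real.rpow_one]; ring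
      _ = (-z) * x ^ (-α) := by
            rw [← Real.rpow_add hx0, show (1:ℝ) + (-1 - α) = -α by ring]
  have h2 : IntegrableOn (fun x : ℝ => (Real.exp (z * x) - 1) * x ^ (-1 - α)) (Set.Ioi 1) := by
    have hbound : IntegrableOn (fun x : ℝ => x ^ (-1 - α)) (Set.Ioi 1) :=
      integrableOn_Ioi_rpow_of_lt (by linarith) one_pos
    refine Integrable.mono' hbound
      (hmeas _ (fun x hx => (lt_trans one_pos hx : (0:ℝ) < x)) measurableSet_Ioi) ?_
    filter_upwards [ae_restrict_mem measurableSet_Ioi] with x hx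
    have hx0 : (0:ℝ) < x := lt_trans one_pos hx
    obtain ⟨hb0, _, hb2⟩ := stable_exp_bounds hz hx0.le (z := z)
    have hxp : (0:ℝ) ≤ x ^ (-1 - α) := Real.rpow_nonneg hx0.le _
    have he : |Real.exp (z * x) - 1| ≤ 1 := by
      rw [abs_sub_comm, abs_of_nonneg hb0]; exact hb2
    calc ‖(Real.exp (z * x) - 1) * x ^ (-1 - α)‖
        = |Real.exp (z * x) - 1| * x ^ (-1 - α) := by
          rw [norm_mul, Real.norm_eq_abs, Real.norm_eq_abs, abs_of_nonneg hxp]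
      _ ≤ 1 * x ^ (-1 - α) := mul_le_mul_of_nonneg_right he hxp
      _ = x ^ (-1 - α) := one_mul _
  have hU : Set.Ioc (0:ℝ) 1 ∪ Set.Ioi 1 = Set.Ioi 0 := Set.Ioc_union_Ioi_eq_Ioi zero_le_one
  rw [← hU]
  exact h1.union h2

/-- Core analytic identity for the stable subordinator:
∫₀^∞ (e^{zx} - 1) x^{-1-α} dx = Γ(-α)(-z)^α, with Γ(-α) = -Γ(1-α)/α. -/
theorem stable_integral_identity (α z : ℝ) (hα : 0 < α) (hα1 : α < 1) (hz : z < 0) :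
    ∫ x in Set.Ioi (0 : ℝ), (Real.exp (z * x) - 1) * x ^ (-1 - α) =
      Real.Gamma (-α) * (-z) ^ α ∧
    Real.Gamma (-α) = -Real.Gamma (1 - α) / α := by
  have hα0 : α ≠ 0 := ne_of_gt hα
  have hgam : Real.Gamma (-α) = -Real.Gamma (1 - α) / α := by
    have h := Real.Gamma_add_one (s := -α) (by simpa using hα0)
    have h1 : -α + 1 = 1 - α := by ring
    rw [h1] at h
    field_simp
    linarith [h]
  refine ⟨?_, hgam⟩
  have hz' : (0:ℝ) < -z := by linarith
  have I₁ : ∫ x in Set.Ioi (0:ℝ), Real.exp (z * x) * x ^ (-α)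
      = (1 / (-z)) ^ (1 - α) * Real.Gamma (1 - α) := by
    rw [← Real.integral_rpow_mul_exp_neg_mul_Ioi (by linarith : (0:ℝ) < 1 - α) hz']
    refine setIntegral_congr_fun measurableSet_Ioi (fun x _ => ?_)
    rw [show (1 - α - 1) = -α by ring]
    ring_nf
  have hφint := stable_phi_integrable α z hα1 hz
  have hhint := stable_h_integrable α z hα hα1 hz
  set g : ℝ → ℝ := fun x => (1 - Real.exp (z * x)) * x ^ (-α) / α with hg
  set g' : ℝ → ℝ := fun x => (Real.exp (z * x) - 1) * x ^ (-1 - α)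
      - (z / α) * (Real.exp (z * x) * x ^ (-α)) with hg'
  have hderiv : ∀ x ∈ Set.Ioi (0:ℝ), HasDerivAt g (g' x) x := by
    intro x hx
    have hx0 : (0:ℝ) < x := hx
    have h1 : HasDerivAt (fun x : ℝ => 1 - Real.exp (z * x)) (-(Real.exp (z * x) * z)) x := by
      simpa using (((hasDerivAt_id x).const_mul z).exp).const_sub 1
    have h2 : HasDerivAt (fun x : ℝ => x ^ (-α)) (-α * x ^ (-α - 1)) x :=
      Real.hasDerivAt_rpow_const (Or.inl hx0.ne')
    have h3 := (h1.mul h2).div_const α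
    convert h3 using 1 <;> try rfl
    rw [hg', show (-1 - α : ℝ) = -α - 1 by ring]
    field_simp
    ring
  have hcont : ContinuousWithinAt g (Set.Ici (0:ℝ)) 0 := by
    have hg0 : g 0 = 0 := by simp [hg]
    rw [ContinuousWithinAt, hg0]
    apply squeeze_zero_norm' (a := fun x : ℝ => (-z / α) * x ^ (1 - α))
    · filter_upwards [self_mem_nhdsWithin] with x (hx : (0:ℝ) ≤ x)
      rcases eq_or_lt_of_le hx with rfl | hx0
      · simp [hg, Real.zero_rpow (by linarith : -α ≠ 0),
          Real.zero_rpow (by linarith : (1:ℝ) - α ≠ 0)]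
      obtain ⟨hb0, hb1, _⟩ := stable_exp_bounds hz hx0.le (z := z)
      have hxp : (0:ℝ) ≤ x ^ (-α) := Real.rpow_nonneg hx0.le _
      have hnorm : ‖g x‖ = |1 - Real.exp (z * x)| * x ^ (-α) / α := by
        rw [hg]
        rw [Real.norm_eq_abs, abs_div, abs_mul, abs_of_nonneg hxp, abs_of_pos hα]
      rw [hnorm, div_le_iff₀ hα]
      calc |1 - Real.exp (z * x)| * x ^ (-α) ≤ ((-z) * x) * x ^ (-α) := by
            rw [abs_of_nonneg hb0]; exact mul_le_mul_of_nonneg_right hb1 hxp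
        _ = (-z) * (x ^ (1:ℝ) * x ^ (-α)) := by rw [Real.rpow_one]; ring
        _ = (-z) * x ^ (1 - α) := by
            rw [← Real.rpow_add hx0, show (1:ℝ) + -α = 1 - α by ring]
        _ = -z / α * x ^ (1 - α) * α := by field_simp
    · have hc : ContinuousAt (fun x : ℝ => (-z / α) * x ^ (1 - α)) 0 :=
        continuousAt_const.mul (Real.continuousAt_rpow_const 0 (1 - α) (Or.inr (by linarith)))
      have h0 : ((-z / α) * (0:ℝ) ^ (1 - α)) = 0 := by
        rw [Real.zero_rpow (by linarith : (1:ℝ) - α ≠ 0), mul_zero]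
      have hcw := hc.continuousWithinAt (s := Set.Ici (0:ℝ))
      rwa [ContinuousWithinAt, h0] at hcw
  have htop : Tendsto g atTop (nhds 0) := by
    apply squeeze_zero_norm' (a := fun x : ℝ => (1 / α) * x ^ (-α))
    · filter_upwards [eventually_gt_atTop (0:ℝ)] with x hx0
      obtain ⟨hb0, _, hb2⟩ := stable_exp_bounds hz hx0.le (z := z)
      have hxp : (0:ℝ) ≤ x ^ (-α) := Real.rpow_nonneg hx0.le _
      have hnorm : ‖g x‖ = |1 - Real.exp (z * x)| * x ^ (-α) / α := by
        rw [hg, Real.norm_eq_abs, abs_div, abs_mul, abs_of_nonneg hxp, abs_of_pos hα]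
      rw [hnorm, div_le_iff₀ hα]
      calc |1 - Real.exp (z * x)| * x ^ (-α) ≤ 1 * x ^ (-α) := by
            rw [abs_of_nonneg hb0]; exact mul_le_mul_of_nonneg_right hb2 hxp
        _ = 1 / α * x ^ (-α) * α := by field_simp
    · have ht := (tendsto_rpow_neg_atTop hα).const_mul (1 / α)
      simpa using ht
  have hf'int : IntegrableOn g' (Set.Ioi 0) := hhint.sub (hφint.const_mul _)
  have hIBP := integral_Ioi_of_hasDerivAt_of_tendsto hcont hderiv hf'int htop
  have hg0 : g 0 = 0 := by simp [hg]
  rw [hg0, sub_zero] at hIBP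
  have hsplit : ∫ x in Set.Ioi (0:ℝ), g' x
      = (∫ x in Set.Ioi (0:ℝ), (Real.exp (z * x) - 1) * x ^ (-1 - α))
        - (z / α) * ∫ x in Set.Ioi (0:ℝ), Real.exp (z * x) * x ^ (-α) := by
    rw [hg', integral_sub hhint (hφint.const_mul _), integral_const_mul]
  rw [hIBP] at hsplit
  have hmain : (∫ x in Set.Ioi (0:ℝ), (Real.exp (z * x) - 1) * x ^ (-1 - α))
      = (z / α) * ((1 / (-z)) ^ (1 - α) * Real.Gamma (1 - α)) := by
    rw [← I₁]; linarith [hsplit]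
  rw [hmain, hgam]
  have hrw : (1 / (-z)) ^ (1 - α) = (-z) ^ (α - 1) :=
    calc (1 / (-z)) ^ (1 - α) = ((-z) ^ (1 - α))⁻¹ := by
          rw [one_div, Real.inv_rpow hz'.le]
      _ = (-z) ^ (-(1 - α)) := (Real.rpow_neg hz'.le _).symm
      _ = (-z) ^ (α - 1) := by ring_nf
  rw [hrw]
  have hpow : (-z) ^ α = (-z) * (-z) ^ (α - 1) := by
    have h := Real.rpow_add hz' 1 (α - 1)
    rw [show (1:ℝ) + (α - 1) = α by ring, Real.rpow_one] at h
    exact h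
  rw [hpow]
  field_simp
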